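/- Let ν_j := μ(u+v, v; m−j). For all m ∈ ℂ, every integer n ≥ 0, and each sign ε ∈ {+1, −1}, one has ξ_{m−1,n−1,ε} = x^{εn}·q^{n(m−n)}·det M, where M is the (n+1)×(n+1) matrix whose first row is (1, x^{ε}, x^{2ε}, …, x^{nε}) and whose row j (for j = 1, …, n) is (ν_j, ν_{j+1}, …, ν_{j+n}); equivalently M_{0,j'} = x^{εj'} and M_{j,j'} = μ(u+v, v; m−j−j') for 1 ≤ j ≤ n, 0 ≤ j' ≤ n. -/

import Mathlib

noncomputable section

open Complex

/-- Jacobi theta function `θ(v;τ) = Σ_{ν∈ℤ+1/2} e^{2πiν(v+1/2)+πiν²τ}`. -/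
def jtheta (τ v : ℂ) : ℂ :=
  ∑' n : ℤ, Complex.exp (2 * (Real.pi : ℂ) * Complex.I * ((n : ℂ) + 1/2) * (v + 1/2) +
    (Real.pi : ℂ) * Complex.I * ((n : ℂ) + 1/2) ^ 2 * τ)

/-- The `j`-th factor (j = 0,1,2,… corresponding to j+1 = 1,2,…) of the infinite product
in the generalized μ-function. -/
def muFactor (τ u α : ℂ) (n : ℤ) (j : ℕ) : ℂ :=
  (1 - Complex.exp (2 * (Real.pi : ℂ) * Complex.I * u +
      2 * (Real.pi : ℂ) * Complex.I * ((n : ℂ) + ((j : ℂ) + 1)) * τ)) /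
  (1 - Complex.exp (2 * (Real.pi : ℂ) * Complex.I * u +
      2 * (Real.pi : ℂ) * Complex.I * ((n : ℂ) - α + ((j : ℂ) + 1)) * τ))

/-- The `n`-th summand of the series defining the generalized μ-function. -/
def muTerm (τ u v α : ℂ) (n : ℤ) : ℂ :=
  (-1 : ℂ) ^ n * Complex.exp (2 * (Real.pi : ℂ) * Complex.I * ((n : ℂ) + 1/2) * v) *
    Complex.exp ((Real.pi : ℂ) * Complex.I * (n : ℂ) * ((n : ℂ) + 1) * τ) *
    ∏' j : ℕ, muFactor τ u α n j

/-- The generalized μ-function `μ(u,v;α)` of Shibukawa–Tsuchimi. -/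
def mu (τ u v α : ℂ) : ℂ :=
  Complex.exp ((Real.pi : ℂ) * Complex.I * α * (u - v)) / jtheta τ v *
    ∑' n : ℤ, muTerm τ u v α n

/-- The `q`-power `q^s := e^{πisτ}` (where `q = e^{πiτ}`). -/
def qp (τ s : ℂ) : ℂ := Complex.exp ((Real.pi : ℂ) * Complex.I * s * τ)

/-- `ξ_{m,n,k} := det[ μ(u+v+kτ, v; m−j−j') ]_{j,j'=0}^{n}`, an `(n+1)×(n+1)` determinant,
with the convention `ξ_{m,n,k} = 1` for `n < 0`. -/
def xi (τ u v m : ℂ) (n : ℤ) (k : ℂ) : ℂ :=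
  if 0 ≤ n then
    Matrix.det (Matrix.of fun j j' : Fin (n.toNat + 1) =>
      mu τ (u + v + k * τ) v (m - ((j : ℕ) : ℂ) - ((j' : ℕ) : ℂ)))
  else 1

/-- Genericity of `u, v, τ` (relative to the parameters `m` and `k`): `θ(v;τ) ≠ 0`,
every series and infinite product defining the occurring μ-values converges,
and no denominator factor `1 − e^{2πi(u+v+k'τ)+2πi(l−α+j)τ}` vanishes. -/
def MuGeneric (τ u v m k : ℂ) : Prop :=
  jtheta τ v ≠ 0 ∧
  (∀ a b : ℤ, Summable fun n : ℤ =>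
    muTerm τ (u + v + (k + (b : ℂ)) * τ) v (m - (a : ℂ)) n) ∧
  (∀ a b l : ℤ, Multipliable fun j : ℕ =>
    muFactor τ (u + v + (k + (b : ℂ)) * τ) (m - (a : ℂ)) l j) ∧
  (∀ a b l : ℤ, ∀ j : ℕ,
    1 - Complex.exp (2 * (Real.pi : ℂ) * Complex.I * (u + v + (k + (b : ℂ)) * τ) +
      2 * (Real.pi : ℂ) * Complex.I * ((l : ℂ) - (m - (a : ℂ)) + ((j : ℂ) + 1)) * τ) ≠ 0)

open Complex Filter

/-- Abbreviation: `fac τ W s = e^{2πiW + 2πisτ}`. -/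
def fac (τ W s : ℂ) : ℂ :=
  Complex.exp (2 * (Real.pi : ℂ) * Complex.I * W + 2 * (Real.pi : ℂ) * Complex.I * s * τ)

lemma fac_ne_zero (τ W s : ℂ) : fac τ W s ≠ 0 := Complex.exp_ne_zero _

lemma fac_mul (τ W s t : ℂ) : fac τ W s * Complex.exp (2 * (Real.pi:ℂ) * Complex.I * t * τ)
    = fac τ W (s + t) := by
  rw [fac, fac, ← Complex.exp_add]; congr 1; ring

lemma prod_tele {f g h : ℕ → ℂ} (hf : Multipliable f) (hg : Multipliable g)
    (hrel : ∀ j, f j * h (j + 1) = g j * h j) (hh : Tendsto h atTop (nhds 1)) :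
    ∏' j, f j = h 0 * ∏' j, g j := by
  have key : ∀ J, (∏ j ∈ Finset.range J, f j) * h J = h 0 * ∏ j ∈ Finset.range J, g j := by
    intro J
    induction J with
    | zero => simp
    | succ J ih =>
      rw [Finset.prod_range_succ, Finset.prod_range_succ, mul_assoc, hrel J,
        show (∏ j ∈ Finset.range J, f j) * (g J * h J)
          = ((∏ j ∈ Finset.range J, f j) * h J) * g J by ring, ih]
      ring
  have l1 : Tendsto (fun J => (∏ j ∈ Finset.range J, f j) * h J) atTop
      (nhds ((∏' j, f j) * 1)) := hf.hasProd.tendsto_prod_nat.mul hh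
  have l2 : Tendsto (fun J => h 0 * ∏ j ∈ Finset.range J, g j) atTop
      (nhds (h 0 * ∏' j, g j)) := tendsto_const_nhds.mul hg.hasProd.tendsto_prod_nat
  have := tendsto_nhds_unique (l1.congr key) l2
  simpa using this

lemma fac_tendsto (τ W c : ℂ) (hτ : 0 < τ.im) :
    Tendsto (fun j : ℕ => fac τ W (c + (j : ℂ))) atTop (nhds 0) := by
  have heq : ∀ j : ℕ, fac τ W (c + (j : ℂ))
      = Complex.exp (2 * (Real.pi : ℂ) * Complex.I * W + 2 * (Real.pi : ℂ) * Complex.I * c * τ)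
        * Complex.exp (2 * (Real.pi : ℂ) * Complex.I * τ) ^ j := by
    intro j
    rw [fac, ← Complex.exp_nat_mul, ← Complex.exp_add]
    congr 1; push_cast; ring
  have hre : (2 * (Real.pi : ℂ) * Complex.I * τ).re = -(2 * Real.pi * τ.im) := by
    simp [Complex.mul_re, Complex.mul_im]
  have hlt : ‖Complex.exp (2 * (Real.pi : ℂ) * Complex.I * τ)‖ < 1 := by
    rw [Complex.norm_exp, hre]
    have := Real.pi_pos
    have h2 : -(2 * Real.pi * τ.im) < 0 := by nlinarith
    calc Real.exp (-(2 * Real.pi * τ.im)) < Real.exp 0 := Real.exp_lt_exp.mpr h2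
      _ = 1 := Real.exp_zero
  have := (tendsto_pow_atTop_nhds_zero_of_norm_lt_one hlt).const_mul
      (Complex.exp (2 * (Real.pi : ℂ) * Complex.I * W + 2 * (Real.pi : ℂ) * Complex.I * c * τ))
  simp only [mul_zero] at this
  exact Tendsto.congr (fun j => (heq j).symm) this

lemma fac_one_sub_tendsto (τ W c : ℂ) (hτ : 0 < τ.im) :
    Tendsto (fun j : ℕ => 1 - fac τ W (c + (j : ℂ))) atTop (nhds 1) := by
  simpa using tendsto_const_nhds.sub (fac_tendsto τ W c hτ)

lemma muFactor_eq_fac (τ W α : ℂ) (l : ℤ) (j : ℕ) :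
    muFactor τ W α l j = (1 - fac τ W ((l : ℂ) + ((j : ℂ) + 1)))
      / (1 - fac τ W ((l : ℂ) - α + ((j : ℂ) + 1))) := rfl

/-- Product lemma PL: shifting `α` by one inserts one factor. -/
lemma PL (τ W α : ℂ) (l : ℤ) (hτ : 0 < τ.im)
    (hm1 : Multipliable (muFactor τ W (α - 1) l)) (hm2 : Multipliable (muFactor τ W α l))
    (hden : ∀ j : ℕ, 1 - fac τ W ((l : ℂ) - α + ((j : ℂ) + 1)) ≠ 0) :
    ∏' j, muFactor τ W (α - 1) l j
      = (1 - fac τ W ((l : ℂ) - α + 1)) * ∏' j, muFactor τ W α l j := by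
  set h : ℕ → ℂ := fun j => 1 - fac τ W ((l : ℂ) - α + ((j : ℂ) + 1)) with hh_def
  have hrel : ∀ j, muFactor τ W (α - 1) l j * h (j + 1) = muFactor τ W α l j * h j := by
    intro j
    have e1 : muFactor τ W (α - 1) l j = (1 - fac τ W ((l : ℂ) + ((j : ℂ) + 1))) / h (j + 1) := by
      rw [muFactor_eq_fac]
      simp only [hh_def]
      congr 3
      push_cast; ring
    rw [e1, muFactor_eq_fac, div_mul_cancel₀ _ (hden (j+1)), div_mul_cancel₀ _ (hden j)]
  have hh : Tendsto h atTop (nhds 1) := by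
    have := fac_one_sub_tendsto τ W ((l : ℂ) - α + 1) hτ
    apply this.congr
    intro j; simp only [hh_def]; congr 2; ring
  have := prod_tele hm1 hm2 hrel hh
  rw [this]
  simp only [hh_def]
  norm_num

/-- Product lemma PL2: shifting `l` by one. -/
lemma PL2 (τ W α : ℂ) (l : ℤ) (hτ : 0 < τ.im)
    (hm1 : Multipliable (muFactor τ W α (l - 1))) (hm2 : Multipliable (muFactor τ W α l))
    (hden0 : 1 - fac τ W ((l : ℂ) - α) ≠ 0) :
    (1 - fac τ W ((l : ℂ) - α)) * ∏' j, muFactor τ W α (l - 1) j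
      = (1 - fac τ W (l : ℂ)) * ∏' j, muFactor τ W α l j := by
  set h : ℕ → ℂ := fun j => (1 - fac τ W ((l : ℂ) + (j : ℂ))) / (1 - fac τ W ((l : ℂ) - α + (j : ℂ)))
    with hh_def
  have hf : ∀ j, muFactor τ W α (l - 1) j = h j := by
    intro j
    rw [muFactor_eq_fac]
    simp only [hh_def]
    congr 3 <;> push_cast <;> ring
  have hg : ∀ j, muFactor τ W α l j = h (j + 1) := by
    intro j
    rw [muFactor_eq_fac]
    simp only [hh_def]
    congr 3 <;> push_cast <;> ring
  have hrel : ∀ j, muFactor τ W α (l - 1) j * h (j + 1) = muFactor τ W α l j * h j := by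
    intro j; rw [hf j, hg j]; ring
  have hh : Tendsto h atTop (nhds 1) := by
    have h1 := fac_one_sub_tendsto τ W (l : ℂ) hτ
    have h2 := fac_one_sub_tendsto τ W ((l : ℂ) - α) hτ
    have := h1.div h2 one_ne_zero
    rw [div_one] at this
    exact this
  have := prod_tele hm1 hm2 hrel hh
  rw [this]
  simp only [hh_def]
  norm_num
  rw [← mul_assoc, mul_div_assoc']
  rw [mul_comm (1 - fac τ W ((l:ℂ) - α)) (1 - fac τ W (l:ℂ)), mul_div_assoc]
  rw [div_self hden0, mul_one]

lemma fac_shift (τ W s : ℂ) : fac τ (W - τ) s = fac τ W (s - 1) := by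
  rw [fac, fac]; congr 1; ring

lemma tprod_muFactor_shift (τ W α : ℂ) (n : ℤ) :
    (∏' j, muFactor τ (W - τ) α (n + 1) j) = ∏' j, muFactor τ W α n j := by
  refine tprod_congr fun j => ?_
  rw [muFactor_eq_fac, muFactor_eq_fac, fac_shift, fac_shift]
  congr 3 <;> push_cast <;> ring

/-- Pointwise step for relation R. -/
lemma R_pt (τ W v α : ℂ) (n : ℤ)
    (hPL : ∏' j, muFactor τ W (α - 1) n j
      = (1 - fac τ W ((n : ℂ) - α + 1)) * ∏' j, muFactor τ W α n j) :
    muTerm τ (W - τ) v α (n + 1)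
      = -Complex.exp (2 * (Real.pi:ℂ) * Complex.I * v - 2 * (Real.pi:ℂ) * Complex.I * W
            + 2 * (Real.pi:ℂ) * Complex.I * α * τ)
        * (muTerm τ W v α n - muTerm τ W v (α - 1) n) := by
  have hsign : ((-1:ℂ)) ^ (n + 1) = -((-1:ℂ)) ^ n := by
    rw [zpow_add₀ (by norm_num : (-1:ℂ) ≠ 0), zpow_one]; ring
  rw [muTerm, muTerm, muTerm, tprod_muFactor_shift, hPL]
  have h2 : Complex.exp (2 * (Real.pi:ℂ) * Complex.I * (((n+1 : ℤ) : ℂ) + 1/2) * v)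
        * Complex.exp ((Real.pi:ℂ) * Complex.I * ((n+1 : ℤ) : ℂ) * (((n+1 : ℤ) : ℂ) + 1) * τ)
      = Complex.exp (2 * (Real.pi:ℂ) * Complex.I * v - 2 * (Real.pi:ℂ) * Complex.I * W
            + 2 * (Real.pi:ℂ) * Complex.I * α * τ)
        * (Complex.exp (2 * (Real.pi:ℂ) * Complex.I * ((n : ℂ) + 1/2) * v)
          * Complex.exp ((Real.pi:ℂ) * Complex.I * (n : ℂ) * ((n : ℂ) + 1) * τ)
          * fac τ W ((n : ℂ) - α + 1)) := by
    simp only [fac, ← Complex.exp_add]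
    congr 1; push_cast; ring
  linear_combination (-((-1:ℂ)) ^ n) * (∏' j, muFactor τ W α n j) * h2
    + (Complex.exp (2 * (Real.pi:ℂ) * Complex.I * (((n+1 : ℤ) : ℂ) + 1/2) * v)
        * Complex.exp ((Real.pi:ℂ) * Complex.I * ((n+1 : ℤ) : ℂ) * (((n+1 : ℤ) : ℂ) + 1) * τ)
        * (∏' j, muFactor τ W α n j)) * hsign

/-- Relation R at the level of `mu`. -/
lemma Rmu (τ W v α : ℂ) (hτ : 0 < τ.im) (hθ : jtheta τ v ≠ 0)
    (hs1 : Summable (muTerm τ (W - τ) v α)) (hs2 : Summable (muTerm τ W v α))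
    (hs3 : Summable (muTerm τ W v (α - 1)))
    (hm1 : ∀ n : ℤ, Multipliable (muFactor τ W (α - 1) n))
    (hm2 : ∀ n : ℤ, Multipliable (muFactor τ W α n))
    (hden : ∀ n : ℤ, ∀ j : ℕ, 1 - fac τ W ((n : ℂ) - α + ((j : ℂ) + 1)) ≠ 0) :
    mu τ (W - τ) v α
      = -Complex.exp (2 * (Real.pi:ℂ) * Complex.I * (v - W))
          * Complex.exp ((Real.pi:ℂ) * Complex.I * α * τ)
          * (mu τ W v α
            - Complex.exp ((Real.pi:ℂ) * Complex.I * (W - v)) * mu τ W v (α - 1)) := by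
  have hstep : ∀ n : ℤ, muTerm τ (W - τ) v α (n + 1)
      = -Complex.exp (2 * (Real.pi:ℂ) * Complex.I * v - 2 * (Real.pi:ℂ) * Complex.I * W
            + 2 * (Real.pi:ℂ) * Complex.I * α * τ)
        * (muTerm τ W v α n - muTerm τ W v (α - 1) n) := fun n =>
    R_pt τ W v α n (PL τ W α n hτ (hm1 n) (hm2 n) (hden n))
  have hT : ∑' n : ℤ, muTerm τ (W - τ) v α n
      = -Complex.exp (2 * (Real.pi:ℂ) * Complex.I * v - 2 * (Real.pi:ℂ) * Complex.I * W
            + 2 * (Real.pi:ℂ) * Complex.I * α * τ)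
        * ((∑' n : ℤ, muTerm τ W v α n) - ∑' n : ℤ, muTerm τ W v (α - 1) n) := by
    calc ∑' n : ℤ, muTerm τ (W - τ) v α n
        = ∑' n : ℤ, muTerm τ (W - τ) v α (n + 1) :=
          ((Equiv.addRight (1:ℤ)).tsum_eq (muTerm τ (W - τ) v α)).symm
      _ = ∑' n : ℤ, -Complex.exp (2 * (Real.pi:ℂ) * Complex.I * v
            - 2 * (Real.pi:ℂ) * Complex.I * W + 2 * (Real.pi:ℂ) * Complex.I * α * τ)
            * (muTerm τ W v α n - muTerm τ W v (α - 1) n) := tsum_congr hstep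
      _ = _ := by rw [tsum_mul_left, Summable.tsum_sub hs2 hs3]
  rw [mu, mu, mu, hT]
  set S1 := ∑' n : ℤ, muTerm τ W v α n
  set S2 := ∑' n : ℤ, muTerm τ W v (α - 1) n
  set θ := jtheta τ v
  have hc1 : Complex.exp ((Real.pi:ℂ) * Complex.I * α * (W - τ - v))
        * Complex.exp (2 * (Real.pi:ℂ) * Complex.I * v - 2 * (Real.pi:ℂ) * Complex.I * W
            + 2 * (Real.pi:ℂ) * Complex.I * α * τ)
      = Complex.exp (2 * (Real.pi:ℂ) * Complex.I * (v - W))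
        * Complex.exp ((Real.pi:ℂ) * Complex.I * α * τ)
        * Complex.exp ((Real.pi:ℂ) * Complex.I * α * (W - v)) := by
    simp only [← Complex.exp_add]; congr 1; ring
  have hc2 : Complex.exp ((Real.pi:ℂ) * Complex.I * (W - v))
        * Complex.exp ((Real.pi:ℂ) * Complex.I * (α - 1) * (W - v))
      = Complex.exp ((Real.pi:ℂ) * Complex.I * α * (W - v)) := by
    rw [← Complex.exp_add]; congr 1; ring
  linear_combination (-(S1 - S2) / θ) * hc1
    - Complex.exp (2 * (Real.pi:ℂ) * Complex.I * (v - W))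
      * Complex.exp ((Real.pi:ℂ) * Complex.I * α * τ) * S2 / θ * hc2

/-- Pointwise step PW1. -/
lemma C_pt1 (τ W v β : ℂ) (n : ℤ)
    (hPL : ∏' j, muFactor τ W (β - 1) n j
      = (1 - fac τ W ((n : ℂ) - β + 1)) * ∏' j, muFactor τ W β n j) :
    fac τ W (n : ℂ) * muTerm τ W v β n
      = Complex.exp (2 * (Real.pi:ℂ) * Complex.I * (β - 1) * τ)
        * (muTerm τ W v β n - muTerm τ W v (β - 1) n) := by
  rw [muTerm, muTerm, hPL]
  have key : fac τ W (n : ℂ)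
      = Complex.exp (2 * (Real.pi:ℂ) * Complex.I * (β - 1) * τ) * fac τ W ((n : ℂ) - β + 1) := by
    simp only [fac, ← Complex.exp_add]; congr 1; ring
  linear_combination ((-1:ℂ)) ^ n
    * Complex.exp (2 * (Real.pi:ℂ) * Complex.I * ((n : ℂ) + 1/2) * v)
    * Complex.exp ((Real.pi:ℂ) * Complex.I * (n : ℂ) * ((n : ℂ) + 1) * τ)
    * (∏' j, muFactor τ W β n j) * key

/-- Pointwise step PW3. -/
lemma C_pt3 (τ W v β : ℂ) (n : ℤ)
    (hPL2 : (1 - fac τ W (((n+1 : ℤ) : ℂ) - β)) * ∏' j, muFactor τ W β n j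
      = (1 - fac τ W ((n+1 : ℤ) : ℂ)) * ∏' j, muFactor τ W β (n + 1) j)
    (hPLa : ∏' j, muFactor τ W (β - 1) n j
      = (1 - fac τ W ((n : ℂ) - β + 1)) * ∏' j, muFactor τ W β n j)
    (hPLb : ∏' j, muFactor τ W (β - 2) n j
      = (1 - fac τ W ((n : ℂ) - (β - 1) + 1)) * ∏' j, muFactor τ W (β - 1) n j) :
    (1 - fac τ W ((n+1 : ℤ) : ℂ)) * muTerm τ W v β (n + 1)
      = -Complex.exp (2 * (Real.pi:ℂ) * Complex.I * v - 2 * (Real.pi:ℂ) * Complex.I * W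
            + 2 * (Real.pi:ℂ) * Complex.I * (β - 1) * τ)
        * (muTerm τ W v (β - 1) n - muTerm τ W v (β - 2) n) := by
  have hsign : ((-1:ℂ)) ^ (n + 1) = -((-1:ℂ)) ^ n := by
    rw [zpow_add₀ (by norm_num : (-1:ℂ) ≠ 0), zpow_one]; ring
  rw [muTerm, muTerm, muTerm, hPLb]
  have hstep1 : (1 - fac τ W ((n+1 : ℤ) : ℂ)) * ∏' j, muFactor τ W β (n + 1) j
      = (1 - fac τ W ((n : ℂ) - β + 1)) * ∏' j, muFactor τ W β n j := by
    rw [← hPL2]; congr 2; push_cast; ring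
  have key : ((-1:ℂ)) ^ (n+1)
        * Complex.exp (2 * (Real.pi:ℂ) * Complex.I * (((n+1 : ℤ) : ℂ) + 1/2) * v)
        * Complex.exp ((Real.pi:ℂ) * Complex.I * ((n+1 : ℤ) : ℂ) * (((n+1 : ℤ) : ℂ) + 1) * τ)
      = -Complex.exp (2 * (Real.pi:ℂ) * Complex.I * v - 2 * (Real.pi:ℂ) * Complex.I * W
            + 2 * (Real.pi:ℂ) * Complex.I * (β - 1) * τ)
        * (((-1:ℂ)) ^ n
          * Complex.exp (2 * (Real.pi:ℂ) * Complex.I * ((n : ℂ) + 1/2) * v)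
          * Complex.exp ((Real.pi:ℂ) * Complex.I * (n : ℂ) * ((n : ℂ) + 1) * τ))
        * fac τ W ((n : ℂ) - (β - 1) + 1) := by
    rw [hsign]
    have h2 : Complex.exp (2 * (Real.pi:ℂ) * Complex.I * (((n+1 : ℤ) : ℂ) + 1/2) * v)
        * Complex.exp ((Real.pi:ℂ) * Complex.I * ((n+1 : ℤ) : ℂ) * (((n+1 : ℤ) : ℂ) + 1) * τ)
      = Complex.exp (2 * (Real.pi:ℂ) * Complex.I * v - 2 * (Real.pi:ℂ) * Complex.I * W
            + 2 * (Real.pi:ℂ) * Complex.I * (β - 1) * τ)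
        * (Complex.exp (2 * (Real.pi:ℂ) * Complex.I * ((n : ℂ) + 1/2) * v)
          * Complex.exp ((Real.pi:ℂ) * Complex.I * (n : ℂ) * ((n : ℂ) + 1) * τ))
        * fac τ W ((n : ℂ) - (β - 1) + 1) := by
      simp only [fac, ← Complex.exp_add]; congr 1; push_cast; ring
    linear_combination (-((-1:ℂ)) ^ n) * h2
  -- now the goal is: (1-fac(n+1)) * ((-1)^(n+1)*E2'*E3'*Π_{n+1}^β)
  --   = -c' * ((-1)^n*E2*E3*Π^{β-1} - (-1)^n*E2*E3*(1-fac(n-(β-1)+1))*Π^{β-1})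
  -- RHS = -c'*(-1)^n*E2*E3*fac(n+2-β)*Π^{β-1}; and hPLa : Π^{β-1} = (1-fac(n-β+1))Π^β.
  rw [hPLa]
  linear_combination (((-1:ℂ)) ^ (n+1)
      * Complex.exp (2 * (Real.pi:ℂ) * Complex.I * (((n+1 : ℤ) : ℂ) + 1/2) * v)
      * Complex.exp ((Real.pi:ℂ) * Complex.I * ((n+1 : ℤ) : ℂ) * (((n+1 : ℤ) : ℂ) + 1) * τ)) * hstep1
    + ((1 - fac τ W ((n : ℂ) - β + 1)) * (∏' j, muFactor τ W β n j)) * key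

/-- The contiguous relation C at the level of `mu`. -/
lemma Cmu (τ W v β : ℂ) (hτ : 0 < τ.im) (hθ : jtheta τ v ≠ 0)
    (hs0 : Summable (muTerm τ W v β)) (hs1 : Summable (muTerm τ W v (β - 1)))
    (hs2 : Summable (muTerm τ W v (β - 2)))
    (hm0 : ∀ n : ℤ, Multipliable (muFactor τ W β n))
    (hm1 : ∀ n : ℤ, Multipliable (muFactor τ W (β - 1) n))
    (hm2 : ∀ n : ℤ, Multipliable (muFactor τ W (β - 2) n))
    (hden0 : ∀ n : ℤ, ∀ j : ℕ, 1 - fac τ W ((n : ℂ) - β + ((j : ℂ) + 1)) ≠ 0)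
    (hden1 : ∀ n : ℤ, ∀ j : ℕ, 1 - fac τ W ((n : ℂ) - (β - 1) + ((j : ℂ) + 1)) ≠ 0)
    (hdenl : ∀ n : ℤ, 1 - fac τ W ((n : ℂ) - β) ≠ 0) :
    Complex.exp ((Real.pi:ℂ) * Complex.I * (W - v)) * mu τ W v (β - 2)
      = (Complex.exp ((Real.pi:ℂ) * Complex.I * (W - v)) ^ 2 + 1) * mu τ W v (β - 1)
        + Complex.exp ((Real.pi:ℂ) * Complex.I * (W - v))
          * (Complex.exp ((Real.pi:ℂ) * Complex.I * (2 - 2*β) * τ) - 1) * mu τ W v β := by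
  set X1 := Complex.exp ((Real.pi:ℂ) * Complex.I * (W - v)) with hX1
  set e2 := Complex.exp (2 * (Real.pi:ℂ) * Complex.I * (β - 1) * τ) with he2
  set c' := Complex.exp (2 * (Real.pi:ℂ) * Complex.I * v - 2 * (Real.pi:ℂ) * Complex.I * W
      + 2 * (Real.pi:ℂ) * Complex.I * (β - 1) * τ) with hc'
  set E' := Complex.exp ((Real.pi:ℂ) * Complex.I * (2 - 2*β) * τ) with hE'
  -- the PL instances
  have hPLa : ∀ n : ℤ, ∏' j, muFactor τ W (β - 1) n j
      = (1 - fac τ W ((n : ℂ) - β + 1)) * ∏' j, muFactor τ W β n j :=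
    fun n => PL τ W β n hτ (hm1 n) (hm0 n) (hden0 n)
  have hPLb : ∀ n : ℤ, ∏' j, muFactor τ W (β - 2) n j
      = (1 - fac τ W ((n : ℂ) - (β - 1) + 1)) * ∏' j, muFactor τ W (β - 1) n j := by
    intro n
    have := PL τ W (β - 1) n hτ (by
        have h := hm2 n
        have e : β - 1 - 1 = β - 2 := by ring
        rw [e]; exact h) (hm1 n) (hden1 n)
    have e : β - 1 - 1 = β - 2 := by ring
    rw [e] at this
    exact this
  have hPL2 : ∀ n : ℤ, (1 - fac τ W (((n+1 : ℤ) : ℂ) - β)) * ∏' j, muFactor τ W β n j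
      = (1 - fac τ W ((n+1 : ℤ) : ℂ)) * ∏' j, muFactor τ W β (n + 1) j := by
    intro n
    have := PL2 τ W β (n + 1) hτ (by
        have h := hm0 n
        have e : (n : ℤ) + 1 - 1 = n := by ring
        rw [e]; exact h) (hm0 (n + 1)) (hdenl (n + 1))
    have e : (n : ℤ) + 1 - 1 = n := by ring
    rw [e] at this
    exact this
  -- summability of the auxiliary sequences
  have hPW1 : ∀ n : ℤ, fac τ W (n : ℂ) * muTerm τ W v β n
      = e2 * (muTerm τ W v β n - muTerm τ W v (β - 1) n) :=
    fun n => C_pt1 τ W v β n (hPLa n)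
  have hsum_fac : Summable (fun n : ℤ => fac τ W (n : ℂ) * muTerm τ W v β n) := by
    apply Summable.congr (((hs0.sub hs1).mul_left e2))
    intro n; rw [hPW1 n]
  have hsum_one_sub : Summable (fun n : ℤ => (1 - fac τ W (n : ℂ)) * muTerm τ W v β n) := by
    apply Summable.congr (hs0.sub hsum_fac)
    intro n; ring
  -- the tsum identity
  set S0 := ∑' n : ℤ, muTerm τ W v β n with hS0
  set S1 := ∑' n : ℤ, muTerm τ W v (β - 1) n with hS1
  set S2 := ∑' n : ℤ, muTerm τ W v (β - 2) n with hS2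
  have hU : ∑' n : ℤ, fac τ W (n : ℂ) * muTerm τ W v β n = e2 * (S0 - S1) := by
    rw [tsum_congr hPW1, tsum_mul_left, Summable.tsum_sub hs0 hs1]
  have hH : ∑' n : ℤ, (1 - fac τ W (n : ℂ)) * muTerm τ W v β n = -c' * (S1 - S2) := by
    calc ∑' n : ℤ, (1 - fac τ W (n : ℂ)) * muTerm τ W v β n
        = ∑' n : ℤ, (1 - fac τ W ((n+1 : ℤ) : ℂ)) * muTerm τ W v β (n + 1) :=
          ((Equiv.addRight (1:ℤ)).tsum_eq
            (fun n : ℤ => (1 - fac τ W (n : ℂ)) * muTerm τ W v β n)).symm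
      _ = ∑' n : ℤ, -c' * (muTerm τ W v (β - 1) n - muTerm τ W v (β - 2) n) :=
          tsum_congr fun n => C_pt3 τ W v β n (hPL2 n) (hPLa n) (hPLb n)
      _ = -c' * (S1 - S2) := by rw [tsum_mul_left, Summable.tsum_sub hs1 hs2]
  have hCS : S0 = -c' * (S1 - S2) + e2 * (S0 - S1) := by
    have : S0 = ∑' n : ℤ, ((1 - fac τ W (n : ℂ)) * muTerm τ W v β n
        + fac τ W (n : ℂ) * muTerm τ W v β n) := by
      rw [hS0]; exact tsum_congr fun n => by ring
    conv_lhs => rw [this]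
    rw [Summable.tsum_add hsum_one_sub hsum_fac, hU, hH]
  -- key exponential identities
  have hk1 : X1 ^ 2 * c' = e2 := by
    rw [hX1, he2, hc', ← Complex.exp_nat_mul, ← Complex.exp_add]; congr 1; push_cast; ring
  have hk2 : E' * e2 = 1 := by
    have harg : (Real.pi:ℂ) * Complex.I * (2 - 2*β) * τ
        + 2 * (Real.pi:ℂ) * Complex.I * (β - 1) * τ = 0 := by ring
    rw [hE', he2, ← Complex.exp_add, harg, Complex.exp_zero]
  -- S-level form of C
  have hSfin : S2 = (X1 ^ 2 + 1) * S1 + (E' - 1) * X1 ^ 2 * S0 := by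
    linear_combination (-(X1 ^ 2 * E')) * hCS + (E' * (S1 - S2)) * hk1
      + (S1 - S2 - X1 ^ 2 * S0 + X1 ^ 2 * S1) * hk2
  -- now descend to mu level
  rw [mu, mu, mu]
  set θ := jtheta τ v
  have hb1 : Complex.exp ((Real.pi:ℂ) * Complex.I * (β - 1) * (W - v))
      = X1 * Complex.exp ((Real.pi:ℂ) * Complex.I * (β - 2) * (W - v)) := by
    rw [hX1, ← Complex.exp_add]; congr 1; ring
  have hb2 : Complex.exp ((Real.pi:ℂ) * Complex.I * β * (W - v))
      = X1 ^ 2 * Complex.exp ((Real.pi:ℂ) * Complex.I * (β - 2) * (W - v)) := by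
    rw [hX1, ← Complex.exp_nat_mul, ← Complex.exp_add]; congr 1; push_cast; ring
  linear_combination (X1 * Complex.exp ((Real.pi:ℂ) * Complex.I * (β - 2) * (W - v)) / θ) * hSfin
    - ((X1^2+1) * S1 / θ) * hb1 - (X1 * (E' - 1) * S0 / θ) * hb2

section Entries

variable (τ u v m : ℂ)

lemma gen_sum (hgen : MuGeneric τ u v m 0) (a b : ℤ) :
    Summable (muTerm τ (u + v + (b : ℂ) * τ) v (m - (a : ℂ))) := by
  have := hgen.2.1 a b
  simpa using this

lemma gen_mul (hgen : MuGeneric τ u v m 0) (a b l : ℤ) :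
    Multipliable (muFactor τ (u + v + (b : ℂ) * τ) (m - (a : ℂ)) l) := by
  have := hgen.2.2.1 a b l
  simpa using this

lemma gen_den (hgen : MuGeneric τ u v m 0) (a b l : ℤ) (j : ℕ) :
    1 - fac τ (u + v + (b : ℂ) * τ) ((l : ℂ) - (m - (a : ℂ)) + ((j : ℂ) + 1)) ≠ 0 := by
  have := hgen.2.2.2 a b l j
  rw [show ((0:ℂ) + (b:ℂ)) = (b:ℂ) from zero_add _] at this
  exact this

/-- entry lemma for ε = −1 (multiplied through by x²). -/
lemma entry_neg (hτ : 0 < τ.im) (hgen : MuGeneric τ u v m 0) (k : ℤ) :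
    mu τ (u + v + ((-1 : ℤ) : ℂ) * τ) v (m - (k : ℂ)) * Complex.exp ((Real.pi:ℂ) * Complex.I * u) ^ 2
      = -qp τ (m - (k : ℂ)) * (mu τ (u + v) v (m - (k : ℂ))
          - Complex.exp ((Real.pi:ℂ) * Complex.I * u) * mu τ (u + v) v (m - (k : ℂ) - 1)) := by
  set x := Complex.exp ((Real.pi:ℂ) * Complex.I * u) with hx
  have hW0 : ∀ a : ℤ, Summable (muTerm τ (u + v) v (m - (a : ℂ))) := by
    intro a
    have := gen_sum τ u v m hgen a 0
    rw [show u + v + ((0:ℤ) : ℂ) * τ = u + v by push_cast; ring] at this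
    exact this
  have hWm : Summable (muTerm τ (u + v - τ) v (m - (k : ℂ))) := by
    have := gen_sum τ u v m hgen k (-1)
    rw [show u + v + ((-1:ℤ) : ℂ) * τ = u + v - τ by push_cast; ring] at this
    exact this
  have hM : ∀ a l : ℤ, Multipliable (muFactor τ (u + v) (m - (a : ℂ)) l) := by
    intro a l
    have := gen_mul τ u v m hgen a 0 l
    rw [show u + v + ((0:ℤ) : ℂ) * τ = u + v by push_cast; ring] at this
    exact this
  have hD : ∀ n : ℤ, ∀ j : ℕ, 1 - fac τ (u + v) ((n : ℂ) - (m - (k : ℂ)) + ((j : ℂ) + 1)) ≠ 0 := by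
    intro n j
    have := gen_den τ u v m hgen k 0 n j
    rw [show u + v + ((0:ℤ) : ℂ) * τ = u + v by push_cast; ring] at this
    exact this
  have hR := Rmu τ (u + v) v (m - (k : ℂ)) hτ hgen.1 hWm (hW0 k) (by
      have := hW0 (k + 1)
      rw [show m - ((k + 1 : ℤ) : ℂ) = m - (k : ℂ) - 1 by push_cast; ring] at this
      exact this)
    (fun n => by
      have := hM (k + 1) n
      rw [show m - ((k + 1 : ℤ) : ℂ) = m - (k : ℂ) - 1 by push_cast; ring] at this
      exact this)
    (fun n => hM k n) hD
  rw [show u + v - τ = u + v + ((-1 : ℤ) : ℂ) * τ by push_cast; ring] at hR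
  have hA : x ^ 2 * Complex.exp (2 * (Real.pi:ℂ) * Complex.I * (v - (u + v))) = 1 := by
    rw [hx, ← Complex.exp_nat_mul, ← Complex.exp_add, ← Complex.exp_zero]
    congr 1; push_cast; ring
  have hB : Complex.exp ((Real.pi:ℂ) * Complex.I * (u + v - v)) = x := by
    rw [hx]; congr 1; ring
  rw [qp]
  set P := Complex.exp (2 * (Real.pi:ℂ) * Complex.I * (v - (u + v)))
  set Q := Complex.exp ((Real.pi:ℂ) * Complex.I * (m - (k : ℂ)) * τ)
  set ν0 := mu τ (u + v) v (m - (k : ℂ))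
  set ν1 := mu τ (u + v) v (m - (k : ℂ) - 1)
  linear_combination x ^ 2 * hR + (-Q * ν0 + x * Q * ν1) * hA
    + (x ^ 2 * P * Q * ν1) * hB

end Entries

section EntryPos

variable (τ u v m : ℂ)

/-- entry lemma for ε = +1 (multiplied through by x). -/
lemma entry_pos (hτ : 0 < τ.im) (hgen : MuGeneric τ u v m 0) (k : ℤ) :
    mu τ (u + v + ((1 : ℤ) : ℂ) * τ) v (m - (k : ℂ)) * Complex.exp ((Real.pi:ℂ) * Complex.I * u)
      = -Complex.exp ((Real.pi:ℂ) * Complex.I * u) ^ 2 * qp τ (m - (k : ℂ))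
        * (Complex.exp ((Real.pi:ℂ) * Complex.I * u) * mu τ (u + v) v (m - (k : ℂ))
          - mu τ (u + v) v (m - (k : ℂ) - 1)) := by
  set x := Complex.exp ((Real.pi:ℂ) * Complex.I * u) with hx
  set W : ℂ := u + v + ((1 : ℤ) : ℂ) * τ with hWdef
  have hWs : ∀ c : ℂ, c = m - (k:ℂ) ∨ c = m - (k:ℂ) - 1 ∨ c = m - (k:ℂ) - 2 →
      Summable (muTerm τ W v c) := by
    rintro c (rfl | rfl | rfl)
    · exact gen_sum τ u v m hgen k 1
    · have := gen_sum τ u v m hgen (k+1) 1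
      rw [show m - ((k + 1 : ℤ) : ℂ) = m - (k : ℂ) - 1 by push_cast; ring] at this; exact this
    · have := gen_sum τ u v m hgen (k+2) 1
      rw [show m - ((k + 2 : ℤ) : ℂ) = m - (k : ℂ) - 2 by push_cast; ring] at this; exact this
  have hMs : ∀ c : ℂ, c = m - (k:ℂ) ∨ c = m - (k:ℂ) - 1 ∨ c = m - (k:ℂ) - 2 →
      ∀ l : ℤ, Multipliable (muFactor τ W c l) := by
    rintro c (rfl | rfl | rfl) l
    · exact gen_mul τ u v m hgen k 1 l
    · have := gen_mul τ u v m hgen (k+1) 1 l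
      rw [show m - ((k + 1 : ℤ) : ℂ) = m - (k : ℂ) - 1 by push_cast; ring] at this; exact this
    · have := gen_mul τ u v m hgen (k+2) 1 l
      rw [show m - ((k + 2 : ℤ) : ℂ) = m - (k : ℂ) - 2 by push_cast; ring] at this; exact this
  have hD0 : ∀ n : ℤ, ∀ j : ℕ, 1 - fac τ W ((n : ℂ) - (m - (k:ℂ)) + ((j : ℂ) + 1)) ≠ 0 :=
    fun n j => gen_den τ u v m hgen k 1 n j
  have hD1 : ∀ n : ℤ, ∀ j : ℕ, 1 - fac τ W ((n : ℂ) - (m - (k:ℂ) - 1) + ((j : ℂ) + 1)) ≠ 0 := by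
    intro n j
    have := gen_den τ u v m hgen (k+1) 1 n j
    rw [show (n : ℂ) - (m - ((k + 1 : ℤ) : ℂ)) + ((j : ℂ) + 1)
        = (n : ℂ) - (m - (k:ℂ) - 1) + ((j : ℂ) + 1) by push_cast; ring] at this
    exact this
  have hDl : ∀ n : ℤ, 1 - fac τ W ((n : ℂ) - (m - (k:ℂ))) ≠ 0 := by
    intro n
    have := gen_den τ u v m hgen k 1 (n - 1) 0
    rw [show ((n - 1 : ℤ) : ℂ) - (m - (k:ℂ)) + (((0:ℕ) : ℂ) + 1)
        = (n : ℂ) - (m - (k:ℂ)) by push_cast; ring] at this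
    exact this
  -- summability at the point u+v (for the R conclusions)
  have hW0 : Summable (muTerm τ (W - τ) v (m - (k:ℂ))) := by
    have := gen_sum τ u v m hgen k 0
    rw [show u + v + ((0:ℤ) : ℂ) * τ = W - τ by rw [hWdef]; push_cast; ring] at this
    exact this
  have hW0' : Summable (muTerm τ (W - τ) v (m - (k:ℂ) - 1)) := by
    have := gen_sum τ u v m hgen (k+1) 0
    rw [show u + v + ((0:ℤ) : ℂ) * τ = W - τ by rw [hWdef]; push_cast; ring,
      show m - ((k + 1 : ℤ) : ℂ) = m - (k : ℂ) - 1 by push_cast; ring] at this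
    exact this
  -- R at α = m - k
  have hR1 := Rmu τ W v (m - (k:ℂ)) hτ hgen.1 hW0 (hWs _ (Or.inl rfl))
    (hWs _ (Or.inr (Or.inl rfl))) (fun n => hMs _ (Or.inr (Or.inl rfl)) n)
    (fun n => hMs _ (Or.inl rfl) n) hD0
  -- R at α = m - k - 1
  have hR2 := Rmu τ W v (m - (k:ℂ) - 1) hτ hgen.1 hW0' (hWs _ (Or.inr (Or.inl rfl)))
    (by
      have := hWs _ (Or.inr (Or.inr rfl))
      rw [show m - (k:ℂ) - 2 = m - (k:ℂ) - 1 - 1 by ring] at this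
      exact this)
    (by
      intro n
      have := hMs _ (Or.inr (Or.inr rfl)) n
      rw [show m - (k:ℂ) - 2 = m - (k:ℂ) - 1 - 1 by ring] at this
      exact this)
    (fun n => hMs _ (Or.inr (Or.inl rfl)) n) hD1
  -- C at β = m - k
  have hC := Cmu τ W v (m - (k:ℂ)) hτ hgen.1 (hWs _ (Or.inl rfl))
    (hWs _ (Or.inr (Or.inl rfl))) (hWs _ (Or.inr (Or.inr rfl)))
    (fun n => hMs _ (Or.inl rfl) n) (fun n => hMs _ (Or.inr (Or.inl rfl)) n)
    (fun n => hMs _ (Or.inr (Or.inr rfl)) n) hD0 hD1 hDl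
  -- clean up the shifted arguments
  rw [show W - τ = u + v by rw [hWdef]; push_cast; ring] at hR1 hR2
  rw [show m - (k:ℂ) - 1 - 1 = m - (k:ℂ) - 2 by ring] at hR2
  -- abbreviations
  set qe := Complex.exp ((Real.pi:ℂ) * Complex.I * τ) with hqe
  set P1 := Complex.exp (2 * (Real.pi:ℂ) * Complex.I * (v - W)) with hP1
  set Q := Complex.exp ((Real.pi:ℂ) * Complex.I * (m - (k:ℂ)) * τ) with hQ
  set Q2 := Complex.exp ((Real.pi:ℂ) * Complex.I * (m - (k:ℂ) - 1) * τ) with hQ2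
  set X1 := Complex.exp ((Real.pi:ℂ) * Complex.I * (W - v)) with hX1
  set E' := Complex.exp ((Real.pi:ℂ) * Complex.I * (2 - 2 * (m - (k:ℂ))) * τ) with hE'
  set t1 := mu τ W v (m - (k:ℂ)) with ht1
  set t2 := mu τ W v (m - (k:ℂ) - 1) with ht2
  set t3 := mu τ W v (m - (k:ℂ) - 2) with ht3
  set ν0 := mu τ (u + v) v (m - (k:ℂ)) with hν0
  set ν1 := mu τ (u + v) v (m - (k:ℂ) - 1) with hν1
  -- exponential facts
  have hA : x ^ 2 * qe ^ 2 * P1 = 1 := by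
    rw [hx, hqe, hP1, hWdef, ← Complex.exp_nat_mul, ← Complex.exp_nat_mul, ← Complex.exp_add,
      ← Complex.exp_add, ← Complex.exp_zero]
    congr 1; push_cast; ring
  have hB : X1 = x * qe := by
    rw [hx, hqe, hX1, hWdef, ← Complex.exp_add]
    congr 1; push_cast; ring
  have hCf : Q2 * qe = Q := by
    rw [hqe, hQ2, hQ, ← Complex.exp_add]
    congr 1; ring
  have hDf : E' * Q ^ 2 = qe ^ 2 := by
    rw [hqe, hE', hQ, ← Complex.exp_nat_mul, ← Complex.exp_nat_mul, ← Complex.exp_add]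
    congr 1; push_cast; ring
  rw [qp, ← hQ]
  linear_combination x^3*Q*hR1 - x^2*Q*hR2 - x^2*P1*Q*Q2*hC
    + (-x*t1)*hA + (-x^3*P1*t1)*hDf
    + (-x^3*P1*Q*(E'-1)*t1 - x^3*P1*Q*X1*t2)*hCf
    + (-x^2*P1*Q*Q2*(E'-1)*t1 - x^2*P1*Q*Q2*X1*t2)*hB

end EntryPos

section DetM

/-- Bordered determinant: first row geometric in `y`, other rows Hankel in `g`. -/
lemma detM_eq (y : ℂ) (hy : y ≠ 0) (n' : ℕ) (g : ℕ → ℂ) :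
    Matrix.det (Matrix.of fun i j : Fin (n' + 2) =>
      if (i : ℕ) = 0 then y ^ (j : ℕ) else g ((i : ℕ) + (j : ℕ)))
      = (-1 : ℂ) ^ (n' + 1) * y ^ (n' + 1)
        * Matrix.det (Matrix.of fun a b : Fin (n' + 1) =>
            g ((a : ℕ) + (b : ℕ) + 1) - y⁻¹ * g ((a : ℕ) + (b : ℕ) + 2)) := by
  set M : Matrix (Fin (n' + 2)) (Fin (n' + 2)) ℂ := Matrix.of fun i j =>
    if (i : ℕ) = 0 then y ^ (j : ℕ) else g ((i : ℕ) + (j : ℕ)) with hM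
  set V : Matrix (Fin (n' + 2)) (Fin (n' + 2)) ℂ := Matrix.of fun p q =>
    if (p : ℕ) = (q : ℕ) then 1 else if (p : ℕ) = (q : ℕ) + 1 then -y⁻¹ else 0 with hV
  have hdetV : V.det = 1 := by
    rw [Matrix.det_of_lowerTriangular V (fun i j hij => by
      have h1 : (i : ℕ) < (j : ℕ) := hij
      rw [hV, Matrix.of_apply, if_neg (by omega), if_neg (by omega)])]
    refine Finset.prod_eq_one fun i _ => by rw [hV, Matrix.of_apply, if_pos rfl]
  have hMV2 : ∀ (i : Fin (n' + 2)) (q : Fin (n' + 1)),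
      (M * V) i q.castSucc = M i q.castSucc - y⁻¹ * M i q.succ := by
    intro i q
    rw [Matrix.mul_apply]
    have hsplit : ∀ p : Fin (n' + 2), M i p * V p q.castSucc
        = (if p = q.castSucc then M i p else 0) + (if p = q.succ then -y⁻¹ * M i p else 0) := by
      intro p
      by_cases h1 : p = q.castSucc
      · subst h1
        rw [hV, Matrix.of_apply, if_pos rfl, if_pos rfl,
          if_neg (by simp only [Fin.ext_iff, Fin.coe_castSucc, Fin.val_succ]; omega)]
        ring
      · by_cases h2 : p = q.succ
        · subst h2
          rw [hV, Matrix.of_apply, if_neg (by simp [Fin.ext_iff]), if_pos (by simp),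
            if_neg h1, if_pos rfl]
          ring
        · rw [hV, Matrix.of_apply, if_neg (fun h => h1 (Fin.ext (by simpa using h))),
            if_neg (fun h => h2 (Fin.ext (by simpa using h))), if_neg h1, if_neg h2]
          ring
    rw [Finset.sum_congr rfl fun p _ => hsplit p, Finset.sum_add_distrib,
      Finset.sum_ite_eq' Finset.univ q.castSucc, Finset.sum_ite_eq' Finset.univ q.succ]
    simp only [Finset.mem_univ, if_true]
    ring
  have hMV1 : ∀ i : Fin (n' + 2), (M * V) i (Fin.last (n' + 1)) = M i (Fin.last (n' + 1)) := by
    intro i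
    rw [Matrix.mul_apply]
    rw [Finset.sum_eq_single (Fin.last (n' + 1)) (fun b _ hb => by
        rw [hV, Matrix.of_apply, if_neg (fun h => hb (Fin.ext (by simpa using h))),
          if_neg (by have := b.isLt; simp only [Fin.val_last]; omega)]
        ring)
      (by simp)]
    rw [hV, Matrix.of_apply, if_pos rfl]
    ring
  have hdet1 : M.det = (M * V).det := by rw [Matrix.det_mul, hdetV, mul_one]
  have hlast : M 0 (Fin.last (n' + 1)) = y ^ (n' + 1) := by
    rw [hM]
    simp [Fin.val_last]
  have hminor : (M * V).submatrix Fin.succ Fin.castSucc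
      = Matrix.of (fun a b : Fin (n' + 1) =>
          g ((a : ℕ) + (b : ℕ) + 1) - y⁻¹ * g ((a : ℕ) + (b : ℕ) + 2)) := by
    ext a b
    rw [Matrix.submatrix_apply, hMV2]
    have e1 : M a.succ b.castSucc = g ((a : ℕ) + (b : ℕ) + 1) := by
      rw [hM]
      simp only [Matrix.of_apply, Fin.val_succ, Fin.coe_castSucc]
      rw [if_neg (by omega)]
      congr 1
      omega
    have e2 : M a.succ b.succ = g ((a : ℕ) + (b : ℕ) + 2) := by
      rw [hM]
      simp only [Matrix.of_apply, Fin.val_succ]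
      rw [if_neg (by omega)]
      congr 1
      omega
    rw [e1, e2, Matrix.of_apply]
  rw [hdet1, Matrix.det_succ_row_zero]
  rw [Finset.sum_eq_single (Fin.last (n' + 1)) (fun j _ hj => by
      obtain ⟨q, rfl⟩ : ∃ q : Fin (n' + 1), j = q.castSucc := by
        refine ⟨⟨(j : ℕ), ?_⟩, Fin.ext rfl⟩
        have h2 : (j : ℕ) ≠ n' + 1 := fun h => hj (Fin.ext (by simpa [Fin.val_last] using h))
        have := j.isLt
        omega
      rw [hMV2]
      have h0 : M 0 q.castSucc - y⁻¹ * M 0 q.succ = 0 := by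
        rw [hM]
        simp only [Matrix.of_apply, Fin.coe_castSucc, Fin.val_succ, Fin.val_zero, if_pos rfl,
          pow_succ]
        field_simp
        simp
      rw [h0]
      ring)
    (by simp)]
  rw [hMV1, hlast, Fin.succAbove_last, hminor, Fin.val_last]
  try ring

end DetM

section MainAux

lemma qp_mul (τ s t : ℂ) : qp τ s * qp τ t = qp τ (s + t) := by
  rw [qp, qp, qp, ← Complex.exp_add]; congr 1; ring

lemma main_aux (τ u v m : ℂ) (e : ℤ) (y : ℂ) (hy : y ≠ 0) (n' : ℕ)
    (hEnt : ∀ k : ℕ, mu τ (u + v + (e : ℂ) * τ) v (m - 1 - (k : ℂ))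
      = -y ^ 2 * qp τ (m - 1 - (k : ℂ))
        * (mu τ (u + v) v (m - ((k : ℂ) + 1)) - y⁻¹ * mu τ (u + v) v (m - ((k : ℂ) + 2)))) :
    Matrix.det (Matrix.of fun j j' : Fin (n' + 1) =>
        mu τ (u + v + (e : ℂ) * τ) v (m - 1 - ((j : ℕ) : ℂ) - ((j' : ℕ) : ℂ)))
      = y ^ (n' + 1) * qp τ (((n' + 1 : ℕ) : ℂ) * (m - ((n' + 1 : ℕ) : ℂ)))
        * Matrix.det (Matrix.of fun i j : Fin (n' + 2) =>
            if (i : ℕ) = 0 then y ^ (j : ℕ)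
            else mu τ (u + v) v (m - ((i : ℕ) : ℂ) - ((j : ℕ) : ℂ))) := by
  have hMconv : (Matrix.of fun i j : Fin (n' + 2) =>
        if (i : ℕ) = 0 then y ^ (j : ℕ) else mu τ (u + v) v (m - ((i : ℕ) : ℂ) - ((j : ℕ) : ℂ)))
      = Matrix.of fun i j : Fin (n' + 2) =>
        if (i : ℕ) = 0 then y ^ (j : ℕ)
        else (fun t : ℕ => mu τ (u + v) v (m - (t : ℂ))) ((i : ℕ) + (j : ℕ)) := by
    ext i j
    by_cases h : (i : ℕ) = 0
    · simp [h]
    · simp only [Matrix.of_apply, if_neg h]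
      congr 1
      push_cast; ring
  rw [hMconv, detM_eq y hy n' (fun t : ℕ => mu τ (u + v) v (m - (t : ℂ)))]
  set B : Matrix (Fin (n' + 1)) (Fin (n' + 1)) ℂ := Matrix.of fun a b : Fin (n' + 1) =>
    (fun t : ℕ => mu τ (u + v) v (m - (t : ℂ))) ((a : ℕ) + (b : ℕ) + 1)
      - y⁻¹ * (fun t : ℕ => mu τ (u + v) v (m - (t : ℂ))) ((a : ℕ) + (b : ℕ) + 2) with hB
  have hLeq : (Matrix.of fun j j' : Fin (n' + 1) =>
        mu τ (u + v + (e : ℂ) * τ) v (m - 1 - ((j : ℕ) : ℂ) - ((j' : ℕ) : ℂ)))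
      = Matrix.of fun j j' : Fin (n' + 1) => qp τ (-((j' : ℕ) : ℂ))
          * (Matrix.of (fun a b : Fin (n' + 1) =>
              (-y ^ 2 * qp τ (m - 1) * qp τ (-((a : ℕ) : ℂ))) * B a b) j j') := by
    ext j j'
    simp only [Matrix.of_apply, hB]
    have h1 := hEnt ((j : ℕ) + (j' : ℕ))
    rw [show m - 1 - ((((j : ℕ) + (j' : ℕ) : ℕ)) : ℂ) = m - 1 - ((j : ℕ) : ℂ) - ((j' : ℕ) : ℂ)
        by push_cast; ring] at h1
    rw [show (m : ℂ) - (((((j : ℕ) + (j' : ℕ) : ℕ)) : ℂ) + 1)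
        = m - ((((j : ℕ) + (j' : ℕ) + 1 : ℕ)) : ℂ) by push_cast; ring,
      show (m : ℂ) - (((((j : ℕ) + (j' : ℕ) : ℕ)) : ℂ) + 2)
        = m - ((((j : ℕ) + (j' : ℕ) + 2 : ℕ)) : ℂ) by push_cast; ring] at h1
    rw [h1]
    have hq2 : qp τ (m - 1) * qp τ (-((j : ℕ) : ℂ)) * qp τ (-((j' : ℕ) : ℂ))
        = qp τ (m - 1 - ((j : ℕ) : ℂ) - ((j' : ℕ) : ℂ)) := by
      rw [qp_mul, qp_mul]; congr 1; try ring
    set Z := mu τ (u + v) v (m - ((((j : ℕ) + (j' : ℕ) + 1 : ℕ)) : ℂ))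
      - y⁻¹ * mu τ (u + v) v (m - ((((j : ℕ) + (j' : ℕ) + 2 : ℕ)) : ℂ))
    linear_combination (y ^ 2 * Z) * hq2
  rw [hLeq, Matrix.det_mul_row, Matrix.det_mul_column]
  -- scalar bookkeeping
  set σ : ℂ := ∑ j : Fin (n' + 1), ((j : ℕ) : ℂ) with hσdef
  have hσ : σ * 2 = (((n' : ℕ) : ℂ) + 1) * ((n' : ℕ) : ℂ) := by
    have h2 : ∑ j : Fin (n' + 1), (j : ℕ) = ∑ i ∈ Finset.range (n' + 1), i :=
      Fin.sum_univ_eq_sum_range (fun i => i) (n' + 1)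
    have h3 := Finset.sum_range_id_mul_two (n' + 1)
    have h4 : (∑ j : Fin (n' + 1), (j : ℕ)) * 2 = (n' + 1) * n' := by
      rw [h2, h3]; simp
    calc σ * 2 = (((∑ j : Fin (n' + 1), (j : ℕ)) * 2 : ℕ) : ℂ) := by
          rw [hσdef]; push_cast; ring
      _ = _ := by rw [h4]; push_cast; ring
  have hprod_cc : ∏ j' : Fin (n' + 1), qp τ (-((j' : ℕ) : ℂ))
      = Complex.exp (-((Real.pi : ℂ) * Complex.I * τ) * σ) := by
    simp only [qp]
    rw [← Complex.exp_sum]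
    congr 1
    rw [hσdef, Finset.mul_sum]
    exact Finset.sum_congr rfl fun j _ => by ring
  have hprod_rr : ∏ a : Fin (n' + 1), (-y ^ 2 * qp τ (m - 1) * qp τ (-((a : ℕ) : ℂ)))
      = (-y ^ 2 * qp τ (m - 1)) ^ (n' + 1)
        * Complex.exp (-((Real.pi : ℂ) * Complex.I * τ) * σ) := by
    rw [Finset.prod_mul_distrib, Finset.prod_const, Finset.card_univ, Fintype.card_fin, hprod_cc]
  rw [hprod_cc, hprod_rr]
  have hkey : Complex.exp (-((Real.pi : ℂ) * Complex.I * τ) * σ)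
        * Complex.exp (-((Real.pi : ℂ) * Complex.I * τ) * σ) * qp τ (m - 1) ^ (n' + 1)
      = qp τ (((n' + 1 : ℕ) : ℂ) * (m - ((n' + 1 : ℕ) : ℂ))) := by
    rw [qp, qp, ← Complex.exp_nat_mul, ← Complex.exp_add, ← Complex.exp_add]
    congr 1
    push_cast
    linear_combination (-(Real.pi : ℂ) * Complex.I * τ) * hσ
  linear_combination ((-1 : ℂ)) ^ (n' + 1) * y ^ (n' + 1) * y ^ (n' + 1) * B.det * hkey

end MainAux

theorem xi_shifted_det (τ u v m : ℂ) (hτ : 0 < τ.im) (hgen : MuGeneric τ u v m 0)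
    (n : ℕ) (ε : ℤ) (hε : ε = 1 ∨ ε = -1) :
    xi τ u v (m - 1) ((n : ℤ) - 1) (ε : ℂ) =
      Complex.exp ((Real.pi : ℂ) * Complex.I * u) ^ (ε * (n : ℤ)) * qp τ ((n : ℂ) * (m - (n : ℂ))) *
        Matrix.det (Matrix.of fun i j : Fin (n + 1) =>
          if (i : ℕ) = 0 then Complex.exp ((Real.pi : ℂ) * Complex.I * u) ^ (ε * ((j : ℕ) : ℤ))
          else mu τ (u + v) v (m - ((i : ℕ) : ℂ) - ((j : ℕ) : ℂ))) := by
  set x := Complex.exp ((Real.pi : ℂ) * Complex.I * u) with hx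
  have hxne : x ≠ 0 := Complex.exp_ne_zero _
  cases n with
  | zero =>
    rw [show ((0 : ℕ) : ℤ) - 1 = (-1 : ℤ) by ring, xi, if_neg (by norm_num)]
    rw [Matrix.det_fin_one]
    simp only [Matrix.of_apply, Fin.val_zero, if_pos rfl, Nat.cast_zero, Int.natCast_zero,
      mul_zero, zpow_zero, sub_zero, zero_mul, one_mul]
    rw [qp, show (Real.pi : ℂ) * Complex.I * 0 * τ = 0 by ring, Complex.exp_zero]
    try norm_num
  | succ n' =>
    have hxi : xi τ u v (m - 1) (((n' + 1 : ℕ) : ℤ) - 1) (ε : ℂ)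
        = Matrix.det (Matrix.of fun j j' : Fin (n' + 1) =>
            mu τ (u + v + (ε : ℂ) * τ) v (m - 1 - ((j : ℕ) : ℂ) - ((j' : ℕ) : ℂ))) := by
      rw [show ((n' + 1 : ℕ) : ℤ) - 1 = ((n' : ℕ) : ℤ) by push_cast; ring]
      rw [xi, if_pos (Int.natCast_nonneg n')]
      simp only [Int.toNat_natCast]
    rcases hε with rfl | rfl
    · -- ε = 1
      have hEnt : ∀ k : ℕ, mu τ (u + v + ((1 : ℤ) : ℂ) * τ) v (m - 1 - (k : ℂ))
          = -x ^ 2 * qp τ (m - 1 - (k : ℂ))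
            * (mu τ (u + v) v (m - ((k : ℂ) + 1)) - x⁻¹ * mu τ (u + v) v (m - ((k : ℂ) + 2))) := by
        intro k
        have heq := entry_pos τ u v m hτ hgen (k + 1)
        rw [show m - ((k + 1 : ℤ) : ℂ) = m - 1 - (k : ℂ) by push_cast; ring] at heq
        rw [show m - 1 - (k : ℂ) - 1 = m - ((k : ℂ) + 2) by push_cast; ring] at heq
        rw [show m - 1 - (k : ℂ) = m - ((k : ℂ) + 1) by ring] at heq
        rw [show m - 1 - (k : ℂ) = m - ((k : ℂ) + 1) by ring]
        have hinv : x⁻¹ * x = 1 := inv_mul_cancel₀ hxne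
        refine mul_right_cancel₀ hxne ?_
        rw [← hx] at heq
        linear_combination heq - x ^ 2 * qp τ (m - ((k : ℂ) + 1))
          * mu τ (u + v) v (m - ((k : ℂ) + 2)) * hinv
      rw [hxi, main_aux τ u v m 1 x hxne n' hEnt]
      simp only [one_mul, zpow_natCast]
    · -- ε = -1
      have hEnt : ∀ k : ℕ, mu τ (u + v + ((-1 : ℤ) : ℂ) * τ) v (m - 1 - (k : ℂ))
          = -x⁻¹ ^ 2 * qp τ (m - 1 - (k : ℂ))
            * (mu τ (u + v) v (m - ((k : ℂ) + 1))
              - x⁻¹⁻¹ * mu τ (u + v) v (m - ((k : ℂ) + 2))) := by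
        intro k
        have heq := entry_neg τ u v m hτ hgen (k + 1)
        rw [show m - ((k + 1 : ℤ) : ℂ) = m - 1 - (k : ℂ) by push_cast; ring] at heq
        rw [show m - 1 - (k : ℂ) - 1 = m - ((k : ℂ) + 2) by push_cast; ring] at heq
        rw [show m - 1 - (k : ℂ) = m - ((k : ℂ) + 1) by ring] at heq
        rw [show m - 1 - (k : ℂ) = m - ((k : ℂ) + 1) by ring, inv_inv]
        have hinv : x⁻¹ * x = 1 := inv_mul_cancel₀ hxne
        refine mul_right_cancel₀ (pow_ne_zero 2 hxne) ?_
        rw [← hx] at heq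
        linear_combination heq + qp τ (m - ((k : ℂ) + 1))
          * (mu τ (u + v) v (m - ((k : ℂ) + 1)) - x * mu τ (u + v) v (m - ((k : ℂ) + 2)))
          * (x⁻¹ * x + 1) * hinv
      rw [hxi, main_aux τ u v m (-1) x⁻¹ (inv_ne_zero hxne) n' hEnt]
      simp only [neg_mul, one_mul, zpow_neg, zpow_natCast, ← inv_pow]

end
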